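/- arXiv:1712.02252 — 4 statements merged into one kernel-verified Lean document; each statement's English description precedes it below -/
import Mathlib

section
/- Uniqueness of the Harder–Narasimhan filtration (Proposition B.1): Let D be a triangulated category equipped with a slicing P. Then the Harder–Narasimhan filtration of any nonzero object of D is unique up to isomorphism of the semistable factors. Precisely: if a nonzero object E admits two HN filtrations, one with objects 0 = E0, …, En = E, semistable factors A1 ∈ P(φ1), …, An ∈ P(φn) and phases φ1 > … > φn, and another with objects 0 = E'0, …, E'm = E, semistable factors A'1 ∈ P(φ'1), …, A'm ∈ P(φ'm) and phases φ'1 > … > φ'm, then n = m, φj = φ'j for all j = 1, …, n, and Aj is isomorphic to A'j for all j = 1, …, n. -/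
open CategoryTheory Category Limits Pretriangulated

universe v u

variable {D : Type u} [Category.{v} D] [Preadditive D] [HasZeroObject D]
  [HasShift D ℤ] [∀ n : ℤ, (shiftFunctor D n).Additive] [Pretriangulated D]

/-- A Harder–Narasimhan filtration of an object `E` with respect to a family
of classes of objects `P : ℝ → Set D`:  an integer `n ≥ 1`, objects
`0 = filtObj 0, filtObj 1, …, filtObj n = E`, nonzero semistable factors
`factor j ∈ P (phase j)` for `1 ≤ j ≤ n`, strictly decreasing phases
`phase 1 > phase 2 > … > phase n`, and distinguished triangles
`filtObj (j-1) ⟶ filtObj j ⟶ factor j ⟶ (filtObj (j-1))⟦1⟧`. -/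
structure HNFiltration (P : ℝ → Set D) (E : D) where
  n : ℕ
  one_le_n : 1 ≤ n
  filtObj : ℕ → D
  factor : ℕ → D
  phase : ℕ → ℝ
  isZero_filtObj_zero : IsZero (filtObj 0)
  filtObj_n : filtObj n = E
  phase_strictAnti : ∀ j, 1 ≤ j → j < n → phase (j + 1) < phase j
  factor_nonzero : ∀ j, 1 ≤ j → j ≤ n → ¬ IsZero (factor j)
  factor_mem : ∀ j, 1 ≤ j → j ≤ n → factor j ∈ P (phase j)
  triangle : ∀ j, 1 ≤ j → j ≤ n →
    ∃ (f : filtObj (j - 1) ⟶ filtObj j) (g : filtObj j ⟶ factor j)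
      (h : factor j ⟶ (filtObj (j - 1))⟦(1 : ℤ)⟧),
        Triangle.mk f g h ∈ distTriang D

/-- A slicing on a (pre)triangulated category `D`:  for each real number `φ`
a class `P φ` of objects (the semistable objects of phase `φ`), closed under
isomorphism, containing the zero objects and closed under finite direct sums,
such that (A2) `P (φ + 1) = P φ ⟦1⟧`, (A3) there are no nonzero morphisms from
semistables of bigger phase to semistables of smaller phase, and (A4) every
nonzero object admits a Harder–Narasimhan filtration. -/
structure Slicing (D : Type u) [Category.{v} D] [Preadditive D] [HasZeroObject D]
    [HasShift D ℤ] [∀ n : ℤ, (shiftFunctor D n).Additive] [Pretriangulated D] where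
  P : ℝ → Set D
  mem_of_iso : ∀ (φ : ℝ) (X Y : D), (X ≅ Y) → X ∈ P φ → Y ∈ P φ
  zero_mem : ∀ (φ : ℝ) (X : D), IsZero X → X ∈ P φ
  sum_mem : ∀ (φ : ℝ) (X Y : D) (b : BinaryBicone X Y), b.IsBilimit →
    X ∈ P φ → Y ∈ P φ → b.pt ∈ P φ
  shift_mem : ∀ (φ : ℝ) (X : D), X ∈ P (φ + 1) ↔ ∃ Y ∈ P φ, Nonempty (X ≅ Y⟦(1 : ℤ)⟧)
  hom_zero : ∀ (φ₁ φ₂ : ℝ), φ₂ < φ₁ → ∀ (A₁ A₂ : D), A₁ ∈ P φ₁ → A₂ ∈ P φ₂ →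
    ∀ f : A₁ ⟶ A₂, f = 0
  hn_exists : ∀ E : D, ¬ IsZero E → Nonempty (HNFiltration P E)


/-- Maps out of a filtered object into a semistable object of phase smaller than
all the phases of the factors vanish. -/
lemma filt_hom_zero (S : Slicing D) {ψ : ℝ} {Y : D} (hY : Y ∈ S.P ψ) :
    ∀ (k : ℕ) (X B : ℕ → D) (θ : ℕ → ℝ),
      IsZero (X 0) →
      (∀ i, 1 ≤ i → i ≤ k → ψ < θ i) →
      (∀ i, 1 ≤ i → i ≤ k → B i ∈ S.P (θ i)) →
      (∀ i, 1 ≤ i → i ≤ k → ∃ (f : X (i-1) ⟶ X i) (g : X i ⟶ B i)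
        (h : B i ⟶ (X (i-1))⟦(1:ℤ)⟧), Triangle.mk f g h ∈ distTriang D) →
      ∀ u : X k ⟶ Y, u = 0 := by
  intro k
  induction k with
  | zero => intro X B θ h0 _ _ _ u; exact h0.eq_of_src u 0
  | succ k ih =>
    intro X B θ h0 hθ hB htri u
    obtain ⟨f, g, h, hT⟩ := htri (k+1) (by omega) le_rfl
    have hf : f ≫ u = 0 := ih X B θ h0 (fun i h1 h2 => hθ i h1 (by omega))
      (fun i h1 h2 => hB i h1 (by omega)) (fun i h1 h2 => htri i h1 (by omega)) (f ≫ u)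
    obtain ⟨y, hy⟩ := Triangle.yoneda_exact₂ _ hT u hf
    have hy0 : y = 0 := S.hom_zero _ _ (hθ (k+1) (by omega) le_rfl) _ _
      (hB (k+1) (by omega) le_rfl) hY y
    rw [hy, hy0, comp_zero]
    rfl

lemma HNFiltration.phase_lt {P : ℝ → Set D} {E : D} (F : HNFiltration P E) {i j : ℕ}
    (h1 : 1 ≤ i) (hij : i < j) (hj : j ≤ F.n) : F.phase j < F.phase i := by
  induction j with
  | zero => omega
  | succ j ih =>
    rcases Nat.lt_or_ge i j with hij' | hij'
    · exact (F.phase_strictAnti j (by omega) (by omega)).trans (ih hij' (by omega))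
    · have hij'' : i = j := by omega
      subst hij''
      exact F.phase_strictAnti i h1 (by omega)

lemma HNFiltration.hom_zero_from (S : Slicing D) {E : D} (F : HNFiltration S.P E)
    {ψ : ℝ} {Y : D} (hY : Y ∈ S.P ψ) {k : ℕ} (hk : k ≤ F.n)
    (hψ : ∀ i, 1 ≤ i → i ≤ k → ψ < F.phase i) (u : F.filtObj k ⟶ Y) : u = 0 :=
  filt_hom_zero S hY k F.filtObj F.factor F.phase F.isZero_filtObj_zero hψ
    (fun i hi1 hi2 => F.factor_mem i hi1 (hi2.trans hk))
    (fun i hi1 hi2 => F.triangle i hi1 (hi2.trans hk)) u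

lemma HNFiltration.hom_zero_from_shift (S : Slicing D) {E : D} (F : HNFiltration S.P E)
    {ψ : ℝ} {Y : D} (hY : Y ∈ S.P ψ) {k : ℕ} (hk : k ≤ F.n)
    (hψ : ∀ i, 1 ≤ i → i ≤ k → ψ < F.phase i + 1)
    (u : (F.filtObj k)⟦(1:ℤ)⟧ ⟶ Y) : u = 0 := by
  refine filt_hom_zero S hY k (fun i => (F.filtObj i)⟦(1:ℤ)⟧)
    (fun i => (F.factor i)⟦(1:ℤ)⟧) (fun i => F.phase i + 1) ?_ hψ ?_ ?_ u
  · exact (shiftFunctor D (1:ℤ)).map_isZero F.isZero_filtObj_zero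
  · intro i hi1 hi2
    exact (S.shift_mem _ _).2 ⟨F.factor i, F.factor_mem i hi1 (hi2.trans hk), ⟨Iso.refl _⟩⟩
  · intro i hi1 hi2
    obtain ⟨f, g, h, hT⟩ := F.triangle i hi1 (hi2.trans hk)
    have hsh : (Triangle.shiftFunctor D (1:ℤ)).obj (Triangle.mk f g h) ∈ distTriang D :=
      Triangle.shift_distinguished _ hT 1
    exact ⟨_, _, _, hsh⟩

lemma HNFiltration.g_ne_zero (S : Slicing D) {E : D} (F : HNFiltration S.P E)
    {j : ℕ} (h1 : 1 ≤ j) (h2 : j ≤ F.n)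
    {f : F.filtObj (j-1) ⟶ F.filtObj j} {g : F.filtObj j ⟶ F.factor j}
    {h : F.factor j ⟶ (F.filtObj (j-1))⟦(1:ℤ)⟧}
    (hT : Triangle.mk f g h ∈ distTriang D) : g ≠ 0 := by
  intro hg
  have hrot := rot_of_distTriang _ hT
  obtain ⟨y, hy⟩ := Triangle.yoneda_exact₂ _ hrot (𝟙 (F.factor j)) (by rw [hg]; exact zero_comp)
  have hy0 : y = 0 := by
    refine F.hom_zero_from_shift S (F.factor_mem j h1 h2) (k := j-1) (by omega) ?_ y
    intro i hi1 hi2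
    have : F.phase j < F.phase i := F.phase_lt hi1 (by omega) h2
    linarith
  refine F.factor_nonzero j h1 h2 ?_
  rw [IsZero.iff_id_eq_zero, hy, hy0, comp_zero]
  rfl

lemma HNFiltration.filtObj_nonzero (S : Slicing D) {E : D} (F : HNFiltration S.P E)
    {j : ℕ} (h1 : 1 ≤ j) (h2 : j ≤ F.n) : ¬ IsZero (F.filtObj j) := by
  intro hz
  obtain ⟨f, g, h, hT⟩ := F.triangle j h1 h2
  exact F.g_ne_zero S h1 h2 hT (hz.eq_of_src g 0)

/-- Truncation of an HN filtration: the filtration of the next-to-top object. -/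
def HNFiltration.trunc {P : ℝ → Set D} {E : D} (F : HNFiltration P E) (hn : 2 ≤ F.n) :
    HNFiltration P (F.filtObj (F.n - 1)) where
  n := F.n - 1
  one_le_n := by omega
  filtObj := F.filtObj
  factor := F.factor
  phase := F.phase
  isZero_filtObj_zero := F.isZero_filtObj_zero
  filtObj_n := rfl
  phase_strictAnti := fun j hj1 hj2 => F.phase_strictAnti j hj1 (by omega)
  factor_nonzero := fun j hj1 hj2 => F.factor_nonzero j hj1 (by omega)
  factor_mem := fun j hj1 hj2 => F.factor_mem j hj1 (by omega)
  triangle := fun j hj1 hj2 => F.triangle j hj1 (by omega)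

lemma hn_aux [IsTriangulated D] (S : Slicing D) : ∀ (N : ℕ) (E E' : D) (_ : E ≅ E')
    (F₁ : HNFiltration S.P E) (F₂ : HNFiltration S.P E'), F₁.n ≤ N →
    F₁.n = F₂.n ∧ ∀ j, 1 ≤ j → j ≤ F₁.n →
      F₁.phase j = F₂.phase j ∧ Nonempty (F₁.factor j ≅ F₂.factor j) := by
  intro N
  induction N with
  | zero => intro E E' e F₁ F₂ hle; exact absurd (F₁.one_le_n.trans hle) (by omega)
  | succ N ih =>
    intro E E' e F₁ F₂ hle
    obtain ⟨f, g, h, hT⟩ := F₁.triangle F₁.n F₁.one_le_n le_rfl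
    obtain ⟨f', g', h', hT'⟩ := F₂.triangle F₂.n F₂.one_le_n le_rfl
    set et : F₁.filtObj F₁.n ≅ F₂.filtObj F₂.n :=
      eqToIso F₁.filtObj_n ≪≫ e ≪≫ (eqToIso F₂.filtObj_n).symm with het
    have hg : g ≠ 0 := F₁.g_ne_zero S F₁.one_le_n le_rfl hT
    have hg' : g' ≠ 0 := F₂.g_ne_zero S F₂.one_le_n le_rfl hT'
    -- Step A : equality of the lowest phases
    have hφψ : F₁.phase F₁.n = F₂.phase F₂.n := by
      by_contra hne
      rcases lt_or_gt_of_ne hne with hlt | hgt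
      · have h0 : et.inv ≫ g = 0 := by
          refine F₂.hom_zero_from S (F₁.factor_mem F₁.n F₁.one_le_n le_rfl) le_rfl ?_ _
          intro i hi1 hi2
          rcases Nat.lt_or_ge i F₂.n with hi | hi
          · exact hlt.trans (F₂.phase_lt hi1 hi le_rfl)
          · have : i = F₂.n := by omega
            subst this; exact hlt
        apply hg
        have : g = et.hom ≫ (et.inv ≫ g) := by simp
        rw [this, h0, comp_zero]
      · have h0 : et.hom ≫ g' = 0 := by
          refine F₁.hom_zero_from S (F₂.factor_mem F₂.n F₂.one_le_n le_rfl) le_rfl ?_ _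
          intro i hi1 hi2
          rcases Nat.lt_or_ge i F₁.n with hi | hi
          · exact hgt.trans (F₁.phase_lt hi1 hi le_rfl)
          · have : i = F₁.n := by omega
            subst this; exact hgt
        apply hg'
        have : g' = et.inv ≫ (et.hom ≫ g') := by simp
        rw [this, h0, comp_zero]
    -- Step B : construction of mutually inverse maps between the lowest factors
    have hcomp : f' ≫ (et.inv ≫ g) = 0 := by
      have := F₂.hom_zero_from S (F₁.factor_mem F₁.n F₁.one_le_n le_rfl)
        (k := F₂.n - 1) (by omega) ?_ (f' ≫ (et.inv ≫ g))
      · exact this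
      · intro i hi1 hi2
        rw [hφψ]
        exact F₂.phase_lt hi1 (by omega) le_rfl
    obtain ⟨u, hu⟩ := Triangle.yoneda_exact₂ _ hT' (et.inv ≫ g) hcomp
    change F₂.factor F₂.n ⟶ F₁.factor F₁.n at u
    change et.inv ≫ g = g' ≫ u at hu
    have hcomp' : f ≫ (et.hom ≫ g') = 0 := by
      have := F₁.hom_zero_from S (F₂.factor_mem F₂.n F₂.one_le_n le_rfl)
        (k := F₁.n - 1) (by omega) ?_ (f ≫ (et.hom ≫ g'))
      · exact this
      · intro i hi1 hi2
        rw [← hφψ]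
        exact F₁.phase_lt hi1 (by omega) le_rfl
    obtain ⟨v, hv⟩ := Triangle.yoneda_exact₂ _ hT (et.hom ≫ g') hcomp'
    change F₁.factor F₁.n ⟶ F₂.factor F₂.n at v
    change et.hom ≫ g' = g ≫ v at hv
    -- v ≫ u = 𝟙 and u ≫ v = 𝟙
    have hvu : v ≫ u = 𝟙 (F₁.factor F₁.n) := by
      have hz : g ≫ (v ≫ u - 𝟙 _) = 0 := by
        have : g ≫ (v ≫ u) = g := by
          rw [← assoc, ← hv, assoc, ← hu]
          simp
        rw [Preadditive.comp_sub, this, comp_id, sub_self]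
      obtain ⟨w, hw⟩ := Triangle.yoneda_exact₃ _ hT _ hz
      change (F₁.filtObj (F₁.n - 1))⟦(1:ℤ)⟧ ⟶ F₁.factor F₁.n at w
      change v ≫ u - 𝟙 _ = h ≫ w at hw
      have hw0 : w = 0 := by
        refine F₁.hom_zero_from_shift S (F₁.factor_mem F₁.n F₁.one_le_n le_rfl)
          (k := F₁.n - 1) (by omega) ?_ w
        intro i hi1 hi2
        have : F₁.phase F₁.n < F₁.phase i := F₁.phase_lt hi1 (by omega) le_rfl
        linarith
      have : v ≫ u - 𝟙 _ = 0 := by rw [hw, hw0, comp_zero]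
      exact sub_eq_zero.1 this
    have huv : u ≫ v = 𝟙 (F₂.factor F₂.n) := by
      have hz : g' ≫ (u ≫ v - 𝟙 _) = 0 := by
        have : g' ≫ (u ≫ v) = g' := by
          rw [← assoc, ← hu, assoc, ← hv]
          simp
        rw [Preadditive.comp_sub, this, comp_id, sub_self]
      obtain ⟨w, hw⟩ := Triangle.yoneda_exact₃ _ hT' _ hz
      change (F₂.filtObj (F₂.n - 1))⟦(1:ℤ)⟧ ⟶ F₂.factor F₂.n at w
      change u ≫ v - 𝟙 _ = h' ≫ w at hw
      have hw0 : w = 0 := by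
        refine F₂.hom_zero_from_shift S (F₂.factor_mem F₂.n F₂.one_le_n le_rfl)
          (k := F₂.n - 1) (by omega) ?_ w
        intro i hi1 hi2
        have : F₂.phase F₂.n < F₂.phase i := F₂.phase_lt hi1 (by omega) le_rfl
        linarith
      have : u ≫ v - 𝟙 _ = 0 := by rw [hw, hw0, comp_zero]
      exact sub_eq_zero.1 this
    -- Step C : isomorphism between the next-to-top filtration objects
    have hvIso : IsIso v := ⟨u, hvu, huv⟩
    obtain ⟨c, hc1, hc2⟩ := complete_distinguished_triangle_morphism
      (Triangle.mk f g h).rotate (Triangle.mk f' g' h').rotate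
      (rot_of_distTriang _ hT) (rot_of_distTriang _ hT') et.hom v (by exact hv.symm)
    have hcIso : IsIso c := by
      have := Pretriangulated.isIso₃_of_isIso₁₂
        (T := (Triangle.mk f g h).rotate) (T' := (Triangle.mk f' g' h').rotate)
        { hom₁ := et.hom, hom₂ := v, hom₃ := c,
          comm₁ := by exact hv.symm, comm₂ := hc1, comm₃ := hc2 }
        (rot_of_distTriang _ hT) (rot_of_distTriang _ hT') (Iso.isIso_hom et) hvIso
      exact this
    have hdmap : (shiftFunctor D (1:ℤ)).map ((shiftFunctor D (1:ℤ)).preimage c) = c :=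
      (shiftFunctor D (1:ℤ)).map_preimage c
    have hdIso : IsIso ((shiftFunctor D (1:ℤ)).preimage c) := by
      have : IsIso ((shiftFunctor D (1:ℤ)).map ((shiftFunctor D (1:ℤ)).preimage c)) := by
        rw [hdmap]; exact hcIso
      exact isIso_of_reflects_iso _ (shiftFunctor D (1:ℤ))
    set d : F₁.filtObj (F₁.n - 1) ⟶ F₂.filtObj (F₂.n - 1) :=
      (shiftFunctor D (1:ℤ)).preimage c with hd
    have hdIso' : IsIso d := hdIso
    -- Case analysis
    have hn₁ := F₁.one_le_n
    have hn₂ := F₂.one_le_n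
    by_cases hn1 : F₁.n = 1
    · by_cases hm1 : F₂.n = 1
      · refine ⟨by omega, fun j hj1 hj2 => ?_⟩
        have hj : j = F₁.n := by omega
        have hm : F₂.n = F₁.n := by omega
        subst hj
        exact ⟨hφψ.trans (by rw [hm]), ⟨asIso v ≪≫ eqToIso (by rw [hm])⟩⟩
      · exfalso
        have hz : IsZero (F₁.filtObj (F₁.n - 1)) := by
          have : F₁.n - 1 = 0 := by omega
          rw [this]; exact F₁.isZero_filtObj_zero
        have hz' : IsZero (F₂.filtObj (F₂.n - 1)) := hz.of_iso (asIso d).symm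
        exact F₂.filtObj_nonzero S (j := F₂.n - 1) (by omega) (by omega) hz'
    · by_cases hm1 : F₂.n = 1
      · exfalso
        have hz' : IsZero (F₂.filtObj (F₂.n - 1)) := by
          have : F₂.n - 1 = 0 := by omega
          rw [this]; exact F₂.isZero_filtObj_zero
        have hz : IsZero (F₁.filtObj (F₁.n - 1)) := hz'.of_iso (asIso d)
        exact F₁.filtObj_nonzero S (j := F₁.n - 1) (by omega) (by omega) hz
      · -- recursive case
        obtain ⟨heq, hfac⟩ := ih _ _ (asIso d) (F₁.trunc (by omega)) (F₂.trunc (by omega))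
          (by simp only [HNFiltration.trunc]; omega)
        have heq' : F₁.n - 1 = F₂.n - 1 := heq
        refine ⟨by omega, fun j hj1 hj2 => ?_⟩
        by_cases hjn : j = F₁.n
        · subst hjn
          have hm : F₂.n = F₁.n := by omega
          exact ⟨hφψ.trans (by rw [hm]), ⟨asIso v ≪≫ eqToIso (by rw [hm])⟩⟩
        · exact hfac j hj1 (by simp only [HNFiltration.trunc]; omega)

/-- Proposition B.1: the Harder–Narasimhan filtration of any nonzero object of a
triangulated category equipped with a slicing is unique up to isomorphism of the
semistable factors. -/
theorem hn_filtration_unique [IsTriangulated D] (S : Slicing D) (E : D)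
    (hE : ¬ IsZero E) (F₁ F₂ : HNFiltration S.P E) :
    F₁.n = F₂.n ∧
      ∀ j, 1 ≤ j → j ≤ F₁.n →
        F₁.phase j = F₂.phase j ∧ Nonempty (F₁.factor j ≅ F₂.factor j) := by
  exact hn_aux S F₁.n E E (Iso.refl E) F₁ F₂ le_rfl
end

section
/- Lemma B.5: Let D be a triangulated category equipped with a slicing P and let E be a nonzero object of D. Suppose E has two HN filtrations: one with semistable factors Aj ∈ P(φj) (j = 1, …, n) and phases φ1 > … > φn, and another with semistable factors A'k ∈ P(φ'k) (k = 1, …, m) and phases φ'1 > … > φ'm. Then the maximal phases agree: φ1 = φ'1. -/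
open CategoryTheory Category Limits Pretriangulated

universe v u

variable {D : Type u} [Category.{v} D] [Preadditive D] [HasZeroObject D]
  [HasShift D ℤ] [∀ n : ℤ, (shiftFunctor D n).Additive] [Pretriangulated D]

/-- The phases of an HN filtration are all at most the first phase. -/
lemma HNFiltration.phase_le {P : ℝ → Set D} {E : D} (F : HNFiltration P E) :
    ∀ j, 1 ≤ j → j ≤ F.n → F.phase j ≤ F.phase 1 := by
  intro j
  induction j with
  | zero => omega
  | succ k ih =>
    intro _ hk
    rcases Nat.eq_zero_or_pos k with h | h
    · subst h; exact le_refl _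
    · have := F.phase_strictAnti k h (by omega)
      have := ih h (by omega)
      linarith

/-- If `A` is semistable of phase bigger than every phase of an HN filtration of `E`,
then every morphism from `A` to any filtration object vanishes. -/
lemma hom_filtObj_zero (S : Slicing D) {E : D} (F : HNFiltration S.P E)
    {A : D} {phi : ℝ} (hA : A ∈ S.P phi) (hphi : F.phase 1 < phi) :
    ∀ k, k ≤ F.n → ∀ f : A ⟶ F.filtObj k, f = 0 := by
  intro k
  induction k with
  | zero =>
    intro _ f
    exact (F.isZero_filtObj_zero).eq_of_tgt f 0
  | succ k ih =>
    intro hk f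
    obtain ⟨u, v, w, hT⟩ := F.triangle (k + 1) (by omega) hk
    have hfv : f ≫ v = 0 := by
      refine S.hom_zero phi (F.phase (k + 1)) ?_ _ _ hA
        (F.factor_mem (k + 1) (by omega) hk) _
      have := F.phase_le (k + 1) (by omega) hk
      linarith
    obtain ⟨g, hg⟩ := Pretriangulated.Triangle.coyoneda_exact₂ _ hT f hfv
    rw [hg, ih (by omega) g]; exact zero_comp

/-- In an HN filtration, there is a nonzero morphism from the first filtration
object (≅ the first factor) to `E`. -/
lemma exists_nonzero_to_filtObj (S : Slicing D) {E : D} (F : HNFiltration S.P E) :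
    ∀ k, 1 ≤ k → k ≤ F.n → ∃ c : F.filtObj 1 ⟶ F.filtObj k, c ≠ 0 := by
  have hX : ¬ IsZero (F.filtObj 1) := by
    intro hz
    obtain ⟨u, v, w, hT⟩ := F.triangle 1 le_rfl F.one_le_n
    exact F.factor_nonzero 1 le_rfl F.one_le_n
      ((Pretriangulated.Triangle.isZero₃_of_isZero₁₂ _ hT F.isZero_filtObj_zero hz))
  have hX1 : F.filtObj 1 ∈ S.P (F.phase 1) := by
    obtain ⟨u, v, w, hT⟩ := F.triangle 1 le_rfl F.one_le_n
    have : IsIso v := (Pretriangulated.Triangle.isZero₁_iff_isIso₂ _ hT).1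
      F.isZero_filtObj_zero
    exact S.mem_of_iso _ _ _ (asIso v).symm (F.factor_mem 1 le_rfl F.one_le_n)
  intro k
  induction k with
  | zero => omega
  | succ k ih =>
    intro _ hk
    rcases Nat.eq_zero_or_pos k with h | h
    · subst h
      refine ⟨𝟙 _, fun h0 => hX ?_⟩
      rw [IsZero.iff_id_eq_zero]; exact h0
    · obtain ⟨c, hc⟩ := ih h (by omega)
      obtain ⟨u, v, w, hT⟩ := F.triangle (k + 1) (by omega) hk
      refine ⟨c ≫ u, fun h0 => ?_⟩
      -- `c` factors through `(factor (k+1))⟦-1⟧`, which receives no nonzero map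
      have hT' := Pretriangulated.inv_rot_of_distTriang _ hT
      obtain ⟨g, hg⟩ := Pretriangulated.Triangle.coyoneda_exact₂ _ hT' c h0
      -- `g : filtObj 1 ⟶ (factor (k+1))⟦-1⟧`
      obtain ⟨Y, hY, ⟨i⟩⟩ := (S.shift_mem (F.phase (k + 1) - 1) (F.factor (k + 1))).1
        (by rw [sub_add_cancel]; exact F.factor_mem (k + 1) (by omega) hk)
      have jiso : (F.factor (k + 1))⟦(-1 : ℤ)⟧ ≅ Y :=
        (shiftFunctor D (-1 : ℤ)).mapIso i ≪≫
          (shiftFunctorCompIsoId D (1 : ℤ) (-1 : ℤ) (by norm_num)).app Y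
      have hzero : g ≫ jiso.hom = 0 := by
        refine S.hom_zero (F.phase 1) (F.phase (k + 1) - 1) ?_ _ _ hX1 hY _
        have := F.phase_le (k + 1) (by omega) hk
        linarith
      have hg0 : g = 0 := by
        have : g = (g ≫ jiso.hom) ≫ jiso.inv := ((assoc g jiso.hom jiso.inv).trans ((congrArg (g ≫ ·) jiso.hom_inv_id).trans (comp_id g))).symm
        rw [this, hzero]; exact zero_comp
      rw [hg0, zero_comp] at hg
      exact hc hg

/-- Lemma B.5: if a nonzero object `E` of a triangulated category with a slicing
has two HN filtrations, then their maximal phases agree: `φ₁ = φ'₁`. -/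
theorem maxPhase_unique [IsTriangulated D] (S : Slicing D) (E : D)
    (hE : ¬ IsZero E) (F₁ F₂ : HNFiltration S.P E) :
    F₁.phase 1 = F₂.phase 1 := by
  have key : ∀ (G₁ G₂ : HNFiltration S.P E), G₁.phase 1 ≤ G₂.phase 1 := by
    intro G₁ G₂
    by_contra hlt
    push_neg at hlt
    obtain ⟨c, hc⟩ := exists_nonzero_to_filtObj S G₁ G₁.n G₁.one_le_n le_rfl
    have hX1 : G₁.filtObj 1 ∈ S.P (G₁.phase 1) := by
      obtain ⟨u, v, w, hT⟩ := G₁.triangle 1 le_rfl G₁.one_le_n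
      have : IsIso v := (Pretriangulated.Triangle.isZero₁_iff_isIso₂ _ hT).1
        G₁.isZero_filtObj_zero
      exact S.mem_of_iso _ _ _ (asIso v).symm (G₁.factor_mem 1 le_rfl G₁.one_le_n)
    have e : G₁.filtObj G₁.n = G₂.filtObj G₂.n := by rw [G₁.filtObj_n, G₂.filtObj_n]
    have h0 : c ≫ eqToHom e = 0 :=
      hom_filtObj_zero S G₂ hX1 hlt G₂.n le_rfl _
    apply hc
    simpa using congrArg (· ≫ eqToHom e.symm) h0
  exact le_antisymm (key F₁ F₂) (key F₂ F₁)
end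

section
/- Claim from the proof of Lemma B.5: Let D be a triangulated category equipped with a slicing P. Suppose a nonzero object E of D has an HN filtration with objects 0 = E0, E1, …, En = E, semistable factors A1 ∈ P(φ1), …, An ∈ P(φn), and phases φ1 > … > φn. Then the abelian group Hom(A1, E) is isomorphic to Hom(A1, A1); in particular, since A1 is nonzero, there exists a nonzero morphism A1 → E, i.e. Hom(A1, E) ≠ 0. -/
open CategoryTheory Category Limits Pretriangulated

universe v u

variable {D : Type u} [Category.{v} D] [Preadditive D] [HasZeroObject D]
  [HasShift D ℤ] [∀ n : ℤ, (shiftFunctor D n).Additive] [Pretriangulated D]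

section Aux

variable {D : Type u} [Category.{v} D] [Preadditive D] [HasZeroObject D]
  [HasShift D ℤ] [∀ n : ℤ, (shiftFunctor D n).Additive] [Pretriangulated D]

/-- If `Hom(A, T.obj₃) = 0` and `Hom(A, T.obj₃⟦-1⟧) = 0` for a distinguished
triangle `T`, then composition with `T.mor₁` is an isomorphism
`Hom(A, T.obj₁) ≃+ Hom(A, T.obj₂)`. -/
lemma compMor₁_addEquiv (T : Triangle D) (hT : T ∈ distTriang D) (A : D)
    (h3 : ∀ f : A ⟶ T.obj₃, f = 0)
    (h3' : ∀ f : A ⟶ (T.obj₃)⟦(-1 : ℤ)⟧, f = 0) :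
    Nonempty ((A ⟶ T.obj₁) ≃+ (A ⟶ T.obj₂)) := by
  refine ⟨AddEquiv.ofBijective
    (AddMonoidHom.mk' (fun g => g ≫ T.mor₁) (fun a b => Preadditive.add_comp _ _ _ _ _ _))
    ⟨?_, ?_⟩⟩
  · rw [injective_iff_map_eq_zero]
    intro g hg
    obtain ⟨h, hh⟩ := Triangle.coyoneda_exact₂ _ (inv_rot_of_distTriang _ hT) g hg
    rw [hh, show h = 0 from h3' h, zero_comp]
    rfl
  · intro f
    obtain ⟨g, hg⟩ := Triangle.coyoneda_exact₂ _ hT f (h3 _)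
    exact ⟨g, hg.symm⟩

end Aux

section Main

variable {D : Type u} [Category.{v} D] [Preadditive D] [HasZeroObject D]
  [HasShift D ℤ] [∀ n : ℤ, (shiftFunctor D n).Additive] [Pretriangulated D]

lemma Slicing.hom_eq_zero_of_lt (S : Slicing D) {φ ψ : ℝ} (h : ψ < φ) {X Y : D}
    (hX : X ∈ S.P φ) (hY : Y ∈ S.P ψ) (f : X ⟶ Y) : f = 0 :=
  S.hom_zero φ ψ h X Y hX hY f

/-- the shift by `-1` of a semistable of phase `ψ` is semistable of phase `ψ - 1`. -/
lemma Slicing.shift_neg_one_mem (S : Slicing D) {ψ : ℝ} {Y : D} (hY : Y ∈ S.P ψ) :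
    Y⟦(-1 : ℤ)⟧ ∈ S.P (ψ - 1) := by
  have : Y ∈ S.P ((ψ - 1) + 1) := by simpa using hY
  obtain ⟨Z, hZ, ⟨e⟩⟩ := (S.shift_mem (ψ - 1) Y).1 this
  refine S.mem_of_iso _ Z _ ?_ hZ
  exact ((shiftFunctorCompIsoId D (1 : ℤ) (-1 : ℤ) (by norm_num)).app Z).symm ≪≫
    ((shiftFunctor D (-1 : ℤ)).mapIso e).symm

lemma HNFiltration.phase_lt_one {P : ℝ → Set D} {E : D} (F : HNFiltration P E)
    {j : ℕ} (h2 : 2 ≤ j) (hn : j ≤ F.n) : F.phase j < F.phase 1 := by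
  induction j with
  | zero => omega
  | succ k ih =>
    rcases Nat.lt_or_ge k 2 with hk | hk
    · interval_cases k
      · omega
      · exact F.phase_strictAnti 1 le_rfl (by omega)
    · exact lt_trans (F.phase_strictAnti k (by omega) (by omega)) (ih (by omega) (by omega))

end Main

/-- Claim from the proof of Lemma B.5: if a nonzero object `E` of a triangulated
category with a slicing has an HN filtration with first semistable factor `A₁`,
then `Hom(A₁, E)` is isomorphic (as an abelian group) to `Hom(A₁, A₁)`; in
particular, since `A₁ ≠ 0`, there is a nonzero morphism `A₁ ⟶ E`. -/
theorem hom_firstFactor_nonzero [IsTriangulated D] (S : Slicing D) (E : D)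
    (hE : ¬ IsZero E) (F : HNFiltration S.P E) :
    Nonempty ((F.factor 1 ⟶ E) ≃+ (F.factor 1 ⟶ F.factor 1)) ∧
      ∃ f : F.factor 1 ⟶ E, f ≠ 0 := by
  set A := F.factor 1 with hA
  have hA1 : A ∈ S.P (F.phase 1) := F.factor_mem 1 le_rfl F.one_le_n
  -- key claim by induction on the filtration
  have claim : ∀ k : ℕ, k + 1 ≤ F.n →
      Nonempty ((A ⟶ F.filtObj (k + 1)) ≃+ (A ⟶ A)) := by
    intro k
    induction k with
    | zero =>
      intro hk
      obtain ⟨f, g, h, hT⟩ := F.triangle 1 le_rfl hk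
      have hz : IsZero ((F.filtObj (1 - 1))⟦(1 : ℤ)⟧) :=
        (shiftFunctor D (1 : ℤ)).map_isZero F.isZero_filtObj_zero
      obtain ⟨e⟩ := compMor₁_addEquiv (Triangle.mk f g h).rotate
        (rot_of_distTriang _ hT) A
        (fun u => hz.eq_of_tgt u 0)
        (fun u => ((shiftFunctor D (-1 : ℤ)).map_isZero hz).eq_of_tgt u 0)
      exact ⟨e⟩
    | succ k ih =>
      intro hk
      obtain ⟨e₀⟩ := ih (by omega)
      obtain ⟨f, g, h, hT⟩ := F.triangle (k + 2) (by omega) hk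
      have hmem : F.factor (k + 2) ∈ S.P (F.phase (k + 2)) :=
        F.factor_mem (k + 2) (by omega) hk
      have hlt : F.phase (k + 2) < F.phase 1 := F.phase_lt_one (by omega) hk
      have h3 : ∀ u : A ⟶ F.factor (k + 2), u = 0 := fun u =>
        S.hom_eq_zero_of_lt hlt hA1 hmem u
      have h3' : ∀ u : A ⟶ (F.factor (k + 2))⟦(-1 : ℤ)⟧, u = 0 := fun u =>
        S.hom_eq_zero_of_lt (by linarith) hA1 (S.shift_neg_one_mem hmem) u
      obtain ⟨e⟩ := compMor₁_addEquiv (Triangle.mk f g h) hT A h3 h3'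
      exact ⟨(show (A ⟶ F.filtObj (k + 1)) ≃+ (A ⟶ F.filtObj (k + 2)) from e).symm.trans e₀⟩
  have h1n := F.one_le_n
  obtain ⟨n', hn'⟩ : ∃ n', n' + 1 = F.n := ⟨F.n - 1, by omega⟩
  obtain ⟨e₀⟩ := claim n' (by omega)
  rw [hn', F.filtObj_n] at e₀
  refine ⟨⟨e₀⟩, e₀.symm (𝟙 A), fun hzero => ?_⟩
  have : (𝟙 A) = 0 := by
    have := e₀.apply_symm_apply (𝟙 A)
    rw [hzero] at this
    simpa using this.symm
  exact F.factor_nonzero 1 le_rfl F.one_le_n (IsZero.of_iso (isZero_zero D)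
    ((Limits.IsZero.iff_id_eq_zero A).mpr this).isoZero)
end

section
/- Lemma B.7: Let D be a triangulated category equipped with a slicing P. Suppose a nonzero object E of D is semistable, i.e. E ∈ P(φ1) for some real number φ1 (equivalently, E admits the length-one HN filtration 0 = E0 → E1 = E with single factor A1 ≅ E in P(φ1)). Suppose E also admits an HN filtration with objects 0 = E'0, E'1, …, E'm = E, semistable factors A'k ∈ P(φ'k) (k = 1, …, m) and phases φ'1 > … > φ'm. Then m = 1 and A'1 is isomorphic to E (so the two filtrations coincide up to isomorphism). -/
open CategoryTheory Category Limits Pretriangulated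

universe v u

variable {D : Type u} [Category.{v} D] [Preadditive D] [HasZeroObject D]
  [HasShift D ℤ] [∀ n : ℤ, (shiftFunctor D n).Additive] [Pretriangulated D]

/-- Lemma B.7: if a nonzero object `E` of a triangulated category with a slicing
is semistable, i.e. `E ∈ P φ₁` for some real number `φ₁`, then any HN filtration
of `E` has length one and its single semistable factor is isomorphic to `E`. -/
theorem hn_of_semistable [IsTriangulated D] (S : Slicing D) (E : D)
    (hE : ¬ IsZero E) (φ₁ : ℝ) (hsemi : E ∈ S.P φ₁)
    (F : HNFiltration S.P E) :
    F.n = 1 ∧ Nonempty (F.factor 1 ≅ E) := by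
  -- phase comparison
  have lt_phase : ∀ j i, 1 ≤ i → i < j → j ≤ F.n → F.phase j < F.phase i := by
    intro j
    induction j with
    | zero => intro i hi hij _; omega
    | succ j ih =>
      intro i hi hij hjn
      rcases Nat.lt_or_ge i j with h | h
      · exact lt_trans (F.phase_strictAnti j (by omega) (by omega))
          (ih i hi h (by omega))
      · have : i = j := by omega
        subst this
        exact F.phase_strictAnti i hi (by omega)
  -- shifted factors
  have memA_shift : ∀ j, 1 ≤ j → j ≤ F.n →
      (F.factor j)⟦(1 : ℤ)⟧ ∈ S.P (F.phase j + 1) := fun j h1 h2 =>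
    (S.shift_mem (F.phase j) _).2 ⟨F.factor j, F.factor_mem j h1 h2, ⟨Iso.refl _⟩⟩
  have memA_unshift : ∀ j, 1 ≤ j → j ≤ F.n →
      (F.factor j)⟦(-1 : ℤ)⟧ ∈ S.P (F.phase j - 1) := by
    intro j h1 h2
    have : F.factor j ∈ S.P (F.phase j - 1 + 1) := by
      rw [sub_add_cancel]; exact F.factor_mem j h1 h2
    obtain ⟨Y, hY, ⟨e⟩⟩ := (S.shift_mem (F.phase j - 1) (F.factor j)).1 this
    exact S.mem_of_iso _ Y _
      (((shiftFunctor D (-1 : ℤ)).mapIso e ≪≫ shiftShiftNeg Y 1).symm) hY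
  -- Claim 1 : any map (filtObj j)⟦1⟧ ⟶ factor n is zero, for j ≤ n - 1
  have claim1 : ∀ j, j + 1 ≤ F.n →
      ∀ r : (F.filtObj j)⟦(1 : ℤ)⟧ ⟶ F.factor F.n, r = 0 := by
    intro j
    induction j with
    | zero =>
      intro _ r
      exact ((shiftFunctor D (1 : ℤ)).map_isZero F.isZero_filtObj_zero).eq_of_src r 0
    | succ j ih =>
      intro hj r
      obtain ⟨f, g, h, hT⟩ := F.triangle (j + 1) (by omega) (by omega)
      have hT2 := rot_of_distTriang _ (rot_of_distTriang _ hT)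
      obtain ⟨s, hs⟩ := Triangle.yoneda_exact₃ _ hT2 r (ih (by omega) _)
      have hph : F.phase F.n < F.phase (j + 1) + 1 := by
        rcases Nat.lt_or_ge (j + 1) F.n with hlt | hge
        · have := lt_phase F.n (j + 1) (by omega) hlt le_rfl
          linarith
        · have heq : j + 1 = F.n := by omega
          rw [heq]; linarith
      have hs0 : s = 0 := S.hom_zero (F.phase (j + 1) + 1) (F.phase F.n) hph _ _
        (memA_shift (j + 1) (by omega) (by omega)) (F.factor_mem F.n F.one_le_n le_rfl) s
      rw [hs, hs0, comp_zero]; rfl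
  -- Step A : φ₁ ≤ phase n
  have stepA : φ₁ ≤ F.phase F.n := by
    obtain ⟨f, g, h, hT⟩ := F.triangle F.n F.one_le_n le_rfl
    have hg : g ≠ 0 := by
      intro hg0
      obtain ⟨r, hr⟩ := Triangle.yoneda_exact₃ _ hT (𝟙 (F.factor F.n))
        (by change g ≫ 𝟙 _ = 0; rw [hg0, zero_comp])
      have hr0 : r = 0 := claim1 (F.n - 1) (by have := F.one_le_n; omega) r
      have : 𝟙 (F.factor F.n) = 0 := by rw [hr, hr0, comp_zero]; rfl
      exact F.factor_nonzero F.n F.one_le_n le_rfl ((IsZero.iff_id_eq_zero _).2 this)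
    by_contra hlt
    push_neg at hlt
    have hEn : F.filtObj F.n ∈ S.P φ₁ := by rw [F.filtObj_n]; exact hsemi
    exact hg (S.hom_zero φ₁ (F.phase F.n) hlt _ _ hEn
      (F.factor_mem F.n F.one_le_n le_rfl) g)
  -- the first filtration object is isomorphic to the first factor
  obtain ⟨f1, g1, h1, hT1⟩ := F.triangle 1 le_rfl F.one_le_n
  have hiso : IsIso g1 :=
    (Triangle.isZero₁_iff_isIso₂ _ hT1).1 F.isZero_filtObj_zero
  have e1 : F.filtObj 1 ≅ F.factor 1 := @asIso _ _ _ _ g1 hiso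
  have memE1 : F.filtObj 1 ∈ S.P (F.phase 1) :=
    S.mem_of_iso _ _ _ e1.symm (F.factor_mem 1 le_rfl F.one_le_n)
  have hE1nz : ¬ IsZero (F.filtObj 1) := fun hz =>
    F.factor_nonzero 1 le_rfl F.one_le_n (hz.of_iso e1.symm)
  -- Claim 2 : nonzero maps filtObj 1 ⟶ filtObj j
  have claim2 : ∀ j, 1 ≤ j → j ≤ F.n →
      ∃ u : F.filtObj 1 ⟶ F.filtObj j, u ≠ 0 := by
    intro j
    induction j with
    | zero => intro h _; exact absurd h (by omega)
    | succ j ih =>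
      intro _ hjn
      rcases Nat.lt_or_ge 0 j with hj | hj
      · obtain ⟨u, hu⟩ := ih (by omega) (by omega)
        obtain ⟨f, g, h, hT⟩ := F.triangle (j + 1) (by omega) hjn
        refine ⟨u ≫ f, fun h0 => hu ?_⟩
        obtain ⟨w, hw⟩ := Triangle.coyoneda_exact₂ _
          (inv_rot_of_distTriang _ hT) (u : F.filtObj 1 ⟶
            (Triangle.mk f g h).invRotate.obj₂) h0
        have hph : F.phase (j + 1) - 1 < F.phase 1 := by
          have := lt_phase (j + 1) 1 le_rfl (by omega) hjn
          linarith
        have hw0 : w = 0 := S.hom_zero (F.phase 1) (F.phase (j + 1) - 1) hph _ _ memE1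
          (memA_unshift (j + 1) (by omega) hjn) w
        rw [hw, hw0, zero_comp]; rfl
      · have : j = 0 := by omega
        subst this
        exact ⟨𝟙 _, fun h0 => hE1nz ((IsZero.iff_id_eq_zero _).2 h0)⟩
  -- Step B : phase 1 ≤ φ₁
  have stepB : F.phase 1 ≤ φ₁ := by
    obtain ⟨u, hu⟩ := claim2 F.n F.one_le_n le_rfl
    by_contra hlt
    push_neg at hlt
    have hEn : F.filtObj F.n ∈ S.P φ₁ := by rw [F.filtObj_n]; exact hsemi
    exact hu (S.hom_zero (F.phase 1) φ₁ hlt _ _ memE1 hEn u)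
  -- conclude n = 1
  have hn : F.n = 1 := by
    by_contra hne
    have h2 : 2 ≤ F.n := by have := F.one_le_n; omega
    have := lt_phase F.n 1 le_rfl (by omega) le_rfl
    linarith
  refine ⟨hn, ⟨e1.symm ≪≫ eqToIso ?_⟩⟩
  rw [← hn]
  exact F.filtObj_n
end
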